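/- arXiv:1905.10002 — 2 statements merged into one kernel-verified Lean document; each statement's English description precedes it below -/
import Mathlib

section
/- Let H be a real Hilbert space with inner product ⟨·,·⟩, let A be a continuous coercive symmetric bilinear form on H (A(v,v) ≥ α‖v‖² with α > 0), let τ > 0, K ∈ ℕ, and let (f^k)_{k=1}^K ⊆ H' with dual pairing bounded by ⟨f, v⟩ ≤ ‖f‖_* · A(v,v)^{1/2}. Suppose U⁰ ∈ H and for k = 0, ..., K-1, U^{k+1} ∈ H satisfies τ^{-1}⟨U^{k+1} - U^k, W⟩ + A(U^{k+1}, W) = ⟨f^{k+1}, W⟩ for all W ∈ H. Then max_{0≤k≤K} ‖U^k‖² + ∑_{k=1}^K τ A(U^k, U^k) ≤ C (‖U⁰‖² + ∑_{k=1}^K τ ‖f^k‖_*²) for a constant C independent of τ, K, U⁰, and the f^k. -/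
theorem stmt_12 {H : Type*} [NormedAddCommGroup H] [InnerProductSpace ℝ H]
    (A : H →ₗ[ℝ] H →ₗ[ℝ] ℝ) (α : ℝ) (hα : 0 < α)
    (hcont : Continuous fun p : H × H => A p.1 p.2)
    (hsymm : ∀ v w : H, A v w = A w v)
    (hcoer : ∀ v : H, α * ‖v‖ ^ 2 ≤ A v v) :
    ∃ C : ℝ, 0 < C ∧
      ∀ (τ : ℝ), 0 < τ → ∀ (K : ℕ) (U : ℕ → H) (f : ℕ → H →L[ℝ] ℝ) (nf : ℕ → ℝ),
        (∀ k, 0 ≤ nf k) →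
        (∀ (k : ℕ) (v : H), f k v ≤ nf k * Real.sqrt (A v v)) →
        (∀ k < K, ∀ W : H,
          τ⁻¹ * (inner ℝ (U (k + 1) - U k) W : ℝ) + A (U (k + 1)) W = f (k + 1) W) →
        (∀ k ≤ K, ‖U k‖ ^ 2 ≤
            C * (‖U 0‖ ^ 2 + ∑ j ∈ Finset.range K, τ * nf (j + 1) ^ 2)) ∧
        ∑ k ∈ Finset.range K, τ * A (U (k + 1)) (U (k + 1)) ≤
            C * (‖U 0‖ ^ 2 + ∑ j ∈ Finset.range K, τ * nf (j + 1) ^ 2) := by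
  refine ⟨1, one_pos, ?_⟩
  intro τ hτ K U f nf hnf hfb heq
  have hA0 : ∀ v : H, 0 ≤ A v v := fun v =>
    le_trans (by positivity) (hcoer v)
  have step : ∀ k < K, ‖U (k+1)‖ ^ 2 + τ * A (U (k+1)) (U (k+1)) ≤
      ‖U k‖ ^ 2 + τ * nf (k+1) ^ 2 := by
    intro k hk
    have h := heq k hk (U (k+1))
    have hb := hfb (k+1) (U (k+1))
    set a := U (k+1) with ha
    set b := U k with hbk
    have h1 : (‖a‖ ^ 2 - ‖b‖ ^ 2) / 2 ≤ (inner ℝ (a - b) a : ℝ) := by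
      rw [inner_sub_left, real_inner_self_eq_norm_sq]
      have h2 := real_inner_le_norm b a
      nlinarith [sq_nonneg (‖a‖ - ‖b‖)]
    have h2 : nf (k+1) * Real.sqrt (A a a) ≤ nf (k+1) ^ 2 / 2 + A a a / 2 := by
      have hs := Real.sq_sqrt (hA0 a)
      nlinarith [sq_nonneg (nf (k+1) - Real.sqrt (A a a))]
    have h3 : τ⁻¹ * ((‖a‖ ^ 2 - ‖b‖ ^ 2) / 2) ≤ nf (k+1) ^ 2 / 2 - A a a / 2 := by
      have h4 : τ⁻¹ * ((‖a‖ ^ 2 - ‖b‖ ^ 2) / 2) ≤ τ⁻¹ * (inner ℝ (a - b) a : ℝ) :=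
        mul_le_mul_of_nonneg_left h1 (by positivity)
      linarith
    have h5 := mul_le_mul_of_nonneg_left h3 hτ.le
    have h6 : τ * τ⁻¹ = 1 := mul_inv_cancel₀ hτ.ne'
    nlinarith
  have main : ∀ m, m ≤ K →
      ‖U m‖ ^ 2 + ∑ k ∈ Finset.range m, τ * A (U (k+1)) (U (k+1)) ≤
        ‖U 0‖ ^ 2 + ∑ j ∈ Finset.range m, τ * nf (j+1) ^ 2 := by
    intro m
    induction m with
    | zero => simp
    | succ n ih =>
      intro hm
      rw [Finset.sum_range_succ, Finset.sum_range_succ]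
      have hs := step n (lt_of_lt_of_le (Nat.lt_succ_self n) hm)
      linarith [ih (Nat.le_of_succ_le hm)]
  constructor
  · intro k hk
    have h1 := main k hk
    have h2 : ∑ j ∈ Finset.range k, τ * nf (j+1) ^ 2 ≤
        ∑ j ∈ Finset.range K, τ * nf (j+1) ^ 2 :=
      Finset.sum_le_sum_of_subset_of_nonneg (Finset.range_subset_range.2 hk)
        (fun j _ _ => by positivity)
    have h3 : (0:ℝ) ≤ ∑ i ∈ Finset.range k, τ * A (U (i+1)) (U (i+1)) :=
      Finset.sum_nonneg fun i _ => mul_nonneg hτ.le (hA0 _)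
    rw [one_mul]
    linarith
  · have h1 := main K le_rfl
    rw [one_mul]
    nlinarith [sq_nonneg ‖U K‖]
end

section
/- Let H be a real Hilbert space, A a continuous symmetric nonnegative bilinear form on a dense subspace V ⊆ H, τ > 0, K ∈ ℕ, and (f^k)_{k=1}^K ⊆ H. Suppose U⁰ ∈ V and for k = 0, ..., K-1, U^{k+1} ∈ V satisfies τ^{-1}⟨U^{k+1} - U^k, φ⟩_H + A(U^{k+1}, φ) = ⟨f^{k+1}, φ⟩_H for all φ ∈ V. Then ∑_{k=0}^{K-1} τ ‖τ^{-1}(U^{k+1} - U^k)‖_H² + max_{0≤k≤K} A(U^k, U^k) ≤ C (A(U⁰, U⁰) + ∑_{k=1}^K τ ‖f^k‖_H²) with C independent of τ, K and the data. -/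
theorem stmt_13 {H : Type*} [NormedAddCommGroup H] [InnerProductSpace ℝ H]
    (V : Submodule ℝ H) (hdense : Dense (V : Set H))
    (A : V →ₗ[ℝ] V →ₗ[ℝ] ℝ)
    (hcont : Continuous fun p : V × V => A p.1 p.2)
    (hsymm : ∀ v w : V, A v w = A w v)
    (hnonneg : ∀ v : V, 0 ≤ A v v) :
    ∃ C : ℝ, 0 < C ∧
      ∀ (τ : ℝ), 0 < τ → ∀ (K : ℕ) (U : ℕ → V) (f : ℕ → H),
        (∀ k < K, ∀ φ : V,
          τ⁻¹ * (inner ℝ ((U (k + 1) : H) - (U k : H)) (φ : H) : ℝ) + A (U (k + 1)) φ =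
            (inner ℝ (f (k + 1)) (φ : H) : ℝ)) →
        ∑ k ∈ Finset.range K, τ * ‖τ⁻¹ • ((U (k + 1) : H) - (U k : H))‖ ^ 2 +
          (⨆ k ∈ Finset.Iic K, A (U k) (U k)) ≤
          C * (A (U 0) (U 0) + ∑ j ∈ Finset.range K, τ * ‖f (j + 1)‖ ^ 2) := by
  refine ⟨2, by norm_num, ?_⟩
  intro τ hτ K U f hU
  have hτ' : τ * τ⁻¹ = 1 := mul_inv_cancel₀ hτ.ne'
  set a : ℕ → ℝ := fun k => A (U k) (U k) with ha
  set g : ℕ → ℝ := fun k => τ * ‖τ⁻¹ • ((U (k + 1) : H) - (U k : H))‖ ^ 2 with hg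
  have hg' : ∀ k, g k = τ⁻¹ * ‖(U (k + 1) : H) - (U k : H)‖ ^ 2 := by
    intro k
    have : ‖τ⁻¹ • ((U (k + 1) : H) - (U k : H))‖ = τ⁻¹ * ‖(U (k + 1) : H) - (U k : H)‖ := by
      rw [norm_smul, Real.norm_eq_abs, abs_of_nonneg (inv_nonneg.mpr hτ.le)]
    rw [hg]
    simp only [this, mul_pow]
    field_simp
  have hgnn : ∀ k, 0 ≤ g k := fun k => mul_nonneg hτ.le (sq_nonneg _)
  have hann : ∀ k, 0 ≤ a k := fun k => hnonneg _
  have hfnn : ∀ j, 0 ≤ τ * ‖f (j + 1)‖ ^ 2 := fun j => mul_nonneg hτ.le (sq_nonneg _)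
  have step : ∀ k < K, g k + a (k + 1) ≤ a k + τ * ‖f (k + 1)‖ ^ 2 := by
    intro k hk
    have heq := hU k hk (U (k + 1) - U k)
    have hcoe : ((U (k + 1) - U k : V) : H) = (U (k + 1) : H) - (U k : H) := rfl
    rw [hcoe] at heq
    set Δ : H := (U (k + 1) : H) - (U k : H) with hΔ
    have hinner : (inner ℝ Δ Δ : ℝ) = ‖Δ‖ ^ 2 := real_inner_self_eq_norm_sq Δ
    rw [hinner] at heq
    have hA2 : (a (k + 1) - a k) / 2 ≤ A (U (k + 1)) (U (k + 1) - U k) := by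
      have h0 : 0 ≤ A (U (k + 1) - U k) (U (k + 1) - U k) := hnonneg _
      have hexp : A (U (k + 1) - U k) (U (k + 1) - U k)
          = a (k + 1) - 2 * A (U (k + 1)) (U k) + a k := by
        simp only [map_sub, LinearMap.sub_apply, ha]
        rw [hsymm (U k) (U (k + 1))]
        ring
      have hexp2 : A (U (k + 1)) (U (k + 1) - U k) = a (k + 1) - A (U (k + 1)) (U k) := by
        simp only [map_sub, ha]
      linarith
    have hf1 : (inner ℝ (f (k + 1)) Δ : ℝ) ≤ ‖f (k + 1)‖ * ‖Δ‖ := real_inner_le_norm _ _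
    have hyoung : τ * (‖f (k + 1)‖ * ‖Δ‖) ≤ τ ^ 2 / 2 * ‖f (k + 1)‖ ^ 2 + 1 / 2 * ‖Δ‖ ^ 2 := by
      nlinarith [sq_nonneg (τ * ‖f (k + 1)‖ - ‖Δ‖)]
    -- multiply through by τ
    rw [hg' k, ← hΔ]
    rw [← mul_le_mul_iff_of_pos_left hτ]
    have e1 : τ * (τ⁻¹ * ‖Δ‖ ^ 2 + a (k + 1)) = ‖Δ‖ ^ 2 + τ * a (k + 1) := by
      rw [mul_add, ← mul_assoc, hτ']; ring
    have e2 : τ * (a k + τ * ‖f (k + 1)‖ ^ 2) = τ * a k + τ ^ 2 * ‖f (k + 1)‖ ^ 2 := by ring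
    rw [e1, e2]
    have hmul := mul_le_mul_of_nonneg_left hA2 hτ.le
    have heqτ : ‖Δ‖ ^ 2 + τ * A (U (k + 1)) (U (k + 1) - U k)
        = τ * (inner ℝ (f (k + 1)) Δ : ℝ) := by
      have := congrArg (fun x => τ * x) heq
      simp only [mul_add, ← mul_assoc, hτ', one_mul] at this
      exact this
    have hfτ := mul_le_mul_of_nonneg_left hf1 hτ.le
    nlinarith
  have cum : ∀ n ≤ K,
      (∑ k ∈ Finset.range n, g k) + a n ≤ a 0 + ∑ j ∈ Finset.range n, τ * ‖f (j + 1)‖ ^ 2 := by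
    intro n hn
    induction n with
    | zero => simp
    | succ m ih =>
        have hm : m < K := Nat.lt_of_lt_of_le (Nat.lt_succ_self m) hn
        have ihm := ih hm.le
        have hs := step m hm
        rw [Finset.sum_range_succ, Finset.sum_range_succ]
        linarith
  set F : ℝ := ∑ j ∈ Finset.range K, τ * ‖f (j + 1)‖ ^ 2 with hF
  have hFnn : 0 ≤ F := Finset.sum_nonneg fun j _ => hfnn j
  have hpart : ∀ n ≤ K, (∑ j ∈ Finset.range n, τ * ‖f (j + 1)‖ ^ 2) ≤ F := by
    intro n hn
    exact Finset.sum_le_sum_of_subset_of_nonneg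
      (Finset.range_subset_range.mpr hn) (fun j _ _ => hfnn j)
  have habound : ∀ n ≤ K, a n ≤ a 0 + F := by
    intro n hn
    have h1 := cum n hn
    have h2 : 0 ≤ ∑ k ∈ Finset.range n, g k := Finset.sum_nonneg fun k _ => hgnn k
    have := hpart n hn
    linarith
  have hSbound : (∑ k ∈ Finset.range K, g k) ≤ a 0 + F := by
    have h1 := cum K le_rfl
    have := hann K
    linarith
  have hsup : (⨆ k ∈ Finset.Iic K, a k) ≤ a 0 + F := by
    apply Real.iSup_le _ (by linarith [hann 0])
    intro k
    apply Real.iSup_le _ (by linarith [hann 0])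
    intro hk
    exact habound k (Finset.mem_Iic.mp hk)
  calc (∑ k ∈ Finset.range K, g k) + (⨆ k ∈ Finset.Iic K, a k)
      ≤ (a 0 + F) + (a 0 + F) := add_le_add hSbound hsup
    _ = 2 * (a 0 + F) := by ring
end
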